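/- Let h : ℝ → ℝ be convex and differentiable on an interval I. Let real numbers F, G, a, b satisfy G ≤ F, a > 0, b > 0, with G − b, G, F, F + a all in I, and suppose h(G) − h(G−b) > 0. Then (h(F+a) − h(F)) / (h(G) − h(G−b)) ≥ a/b. Consequently, if real numbers p and q satisfy p ≥ h(F+a) − h(F) and 0 < q ≤ h(G) − h(G−b), then q/(p+q) ≤ b/(a+b). -/
import Mathlib

/-- The deterministic convexity inequality underlying the coupling lemma
(Lemma 3.2): for a convex differentiable `h` on an interval `I`,
with `G ≤ F`, `a, b > 0` and the relevant points in `I`,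
`(h (F+a) - h F) / (h G - h (G-b)) ≥ a / b`; consequently, if
`p ≥ h (F+a) - h F` and `0 < q ≤ h G - h (G-b)`, then
`q / (p+q) ≤ b / (a+b)`. -/
theorem stmt10 (I : Set ℝ) (h : ℝ → ℝ)
    (hconv : ConvexOn ℝ I h) (hdiff : DifferentiableOn ℝ h I)
    (F G a b : ℝ) (hGF : G ≤ F) (ha : 0 < a) (hb : 0 < b)
    (hGb : G - b ∈ I) (hG : G ∈ I) (hF : F ∈ I) (hFa : F + a ∈ I)
    (hpos : 0 < h G - h (G - b)) :
    a / b ≤ (h (F + a) - h F) / (h G - h (G - b)) ∧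
      ∀ p q : ℝ, h (F + a) - h F ≤ p → 0 < q → q ≤ h G - h (G - b) →
        q / (p + q) ≤ b / (a + b) := by
  have h1 : (h G - h (G - b)) / (G - (G - b)) ≤ (h (F + a) - h (G - b)) / (F + a - (G - b)) :=
    hconv.secant_mono hGb hG hFa (by linarith) (by linarith) (by linarith)
  have h2 : (h (G - b) - h (F + a)) / (G - b - (F + a)) ≤ (h F - h (F + a)) / (F - (F + a)) :=
    hconv.secant_mono hFa hGb hF (by linarith) (by linarith) (by linarith)
  have e1 : (h G - h (G - b)) / (G - (G - b)) = (h G - h (G - b)) / b := by ring_nf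
  have e2 : (h (G - b) - h (F + a)) / (G - b - (F + a)) =
      (h (F + a) - h (G - b)) / (F + a - (G - b)) := by
    rw [← neg_div_neg_eq]; ring_nf
  have e3 : (h F - h (F + a)) / (F - (F + a)) = (h (F + a) - h F) / a := by
    rw [← neg_div_neg_eq]; ring_nf
  have key : (h G - h (G - b)) / b ≤ (h (F + a) - h F) / a := by
    rw [← e1, ← e3]; rw [e2] at h2; linarith
  have hD : 0 < h (F + a) - h F := by
    have : 0 < (h G - h (G - b)) / b := div_pos hpos hb
    have := this.trans_le key
    calc (0:ℝ) < a * ((h (F + a) - h F) / a) := by positivity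
      _ = h (F + a) - h F := by field_simp
  have hab : a * (h G - h (G - b)) ≤ b * (h (F + a) - h F) := by
    rw [div_le_div_iff₀ hb ha] at key; linarith
  constructor
  · rw [div_le_div_iff₀ hb hpos]; linarith
  · intro p q hp hq hqE
    have hpq : 0 < p + q := by linarith
    rw [div_le_div_iff₀ hpq (by linarith : (0:ℝ) < a + b)]
    have h4 : a * q ≤ a * (h G - h (G - b)) := by nlinarith
    nlinarith
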